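/- For the SubsetSum instance, the set of diffs from β_S to β_T under F(≤≥,+) contains a bounded best diff, i.e., a best diff F = (f'_1,…,f'_m) in which every operation f'_i has condition A ≤ a'_i or A ≥ a'_i with a'_i an integer in {0,…,n}. -/

import Mathlib

open scoped Classical

/-- An operation of the family `F(≤≥,+)`: if `dir = true` the condition is `A ≤ a`,
otherwise the condition is `A ≥ a`; the modifier is the increment `B ← B + b`. -/
structure OpIneqAdd where
  dir : Bool
  a : ℝ
  b : ℝ

/-- The condition of an operation, evaluated on an `A`-value `v`. -/
def OpIneqAdd.cond (f : OpIneqAdd) (v : ℤ) : Prop :=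
  if f.dir then (v : ℝ) ≤ f.a else f.a ≤ (v : ℝ)

/-- Applying an operation: every key whose `A`-value satisfies the condition gets
its `B`-value incremented by `b`; other keys are unchanged. -/
noncomputable def OpIneqAdd.apply {K : Type*} (α : K → ℤ) (f : OpIneqAdd) (β : K → ℝ) :
    K → ℝ :=
  fun k => if f.cond (α k) then β k + f.b else β k

/-- Successive application of a finite sequence of operations. -/
noncomputable def applyOpsIneqAdd {K : Type*} (α : K → ℤ) (L : List OpIneqAdd) (β : K → ℝ) :
    K → ℝ :=
  L.foldl (fun β' f => f.apply α β') β

/-- `L` is a diff from `βS` to `βT` under `F(≤≥,+)`. -/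
def IsDiffIneqAdd {K : Type*} (α : K → ℤ) (L : List OpIneqAdd) (βS βT : K → ℝ) : Prop :=
  applyOpsIneqAdd α L βS = βT

/-- `L` is a best diff: a diff of minimum cost (the cost being the number of operations). -/
def IsBestDiffIneqAdd {K : Type*} (α : K → ℤ) (L : List OpIneqAdd) (βS βT : K → ℝ) : Prop :=
  IsDiffIneqAdd α L βS βT ∧
    ∀ L' : List OpIneqAdd, IsDiffIneqAdd α L' βS βT → L.length ≤ L'.length

/-- `A`-values of the SubsetSum instance: `α k = k` on the key set `K = {0,…,n}`. -/
def ssAlpha (n : ℕ) : Fin (n + 1) → ℤ := fun k => ((k : ℕ) : ℤ)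

/-- Source `B`-values of the SubsetSum instance: identically `0`. -/
def ssBS (n : ℕ) : Fin (n + 1) → ℝ := fun _ => 0

/-- Target `B`-values of the SubsetSum instance: `β_T k = b_k = ∑_{ℓ=0}^{k} s ℓ`. -/
noncomputable def ssBT (n : ℕ) (s : ℕ → ℤ) : Fin (n + 1) → ℝ :=
  fun k => ((∑ ℓ ∈ Finset.range ((k : ℕ) + 1), s ℓ : ℤ) : ℝ)

noncomputable def roundOp (n : ℕ) (f : OpIneqAdd) : OpIneqAdd :=
  if f.dir then
    if ⌊f.a⌋ < 0 then ⟨true, 0, 0⟩ else ⟨true, ((min ⌊f.a⌋ (n : ℤ) : ℤ) : ℝ), f.b⟩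
  else
    if (n : ℤ) < ⌈f.a⌉ then ⟨false, 0, 0⟩ else ⟨false, ((max ⌈f.a⌉ 0 : ℤ) : ℝ), f.b⟩

lemma roundOp_bounded (n : ℕ) (f : OpIneqAdd) :
    ∃ a' : ℤ, 0 ≤ a' ∧ a' ≤ (n : ℤ) ∧ (roundOp n f).a = (a' : ℝ) := by
  unfold roundOp
  split_ifs with h1 h2 h3
  · exact ⟨0, le_refl _, Int.ofNat_nonneg n, by norm_num⟩
  · exact ⟨min ⌊f.a⌋ (n : ℤ), le_min (not_lt.1 h2) (Int.ofNat_nonneg n), min_le_right _ _, rfl⟩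
  · exact ⟨0, le_refl _, Int.ofNat_nonneg n, by norm_num⟩
  · exact ⟨max ⌈f.a⌉ 0, le_max_right _ _, max_le (not_lt.1 h3) (Int.ofNat_nonneg n), rfl⟩

lemma roundOp_apply (n : ℕ) (f : OpIneqAdd) (β : Fin (n + 1) → ℝ) :
    (roundOp n f).apply (ssAlpha n) β = f.apply (ssAlpha n) β := by
  funext k
  have hk0 : (0 : ℤ) ≤ ((k : ℕ) : ℤ) := Int.ofNat_nonneg _
  have hkn : ((k : ℕ) : ℤ) ≤ (n : ℤ) := by exact_mod_cast Nat.le_of_lt_succ k.isLt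
  obtain ⟨dir, a, b⟩ := f
  cases dir
  · -- dir = false : condition is a ≤ v
    by_cases h : (n : ℤ) < ⌈a⌉
    · have hA : ¬ a ≤ (((k : ℕ) : ℤ) : ℝ) :=
        not_le.mpr (Int.lt_ceil.mp (lt_of_le_of_lt hkn h))
      simp [roundOp, OpIneqAdd.apply, OpIneqAdd.cond, ssAlpha, h]
      push_cast at hA
      exact fun h' => absurd h' hA
    · have hiff : (((⌈a⌉ ⊔ 0 : ℤ) : ℝ) ≤ (((k : ℕ) : ℤ) : ℝ)) ↔ a ≤ (((k : ℕ) : ℤ) : ℝ) := by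
        rw [Int.cast_le, max_le_iff]
        constructor
        · rintro ⟨h1, _⟩; exact Int.ceil_le.mp h1
        · intro h1; exact ⟨Int.ceil_le.mpr h1, hk0⟩
      simp only [roundOp, OpIneqAdd.apply, OpIneqAdd.cond, ssAlpha, if_neg h,
        Bool.false_eq_true, if_false]
      rw [if_congr hiff rfl rfl]
  · -- dir = true : condition is v ≤ a
    by_cases h : ⌊a⌋ < 0
    · have hA : ¬ (((k : ℕ) : ℤ) : ℝ) ≤ a :=
        not_le.mpr (lt_of_lt_of_le (Int.floor_lt.mp h) (by exact_mod_cast hk0))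
      simp [roundOp, OpIneqAdd.apply, OpIneqAdd.cond, ssAlpha, h]
      push_cast at hA
      exact fun h' => absurd h' hA
    · have hiff : ((((k : ℕ) : ℤ) : ℝ) ≤ ((⌊a⌋ ⊓ (n : ℤ) : ℤ) : ℝ)) ↔ (((k : ℕ) : ℤ) : ℝ) ≤ a := by
        rw [Int.cast_le, le_min_iff]
        constructor
        · rintro ⟨h1, _⟩; exact Int.le_floor.mp h1
        · intro h1; exact ⟨Int.le_floor.mpr h1, hkn⟩
      simp only [roundOp, OpIneqAdd.apply, OpIneqAdd.cond, ssAlpha, if_neg h, if_true]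
      rw [if_congr hiff rfl rfl]

lemma applyOps_sum {K : Type*} (α : K → ℤ) (L : List OpIneqAdd) (β : K → ℝ) (k : K) :
    applyOpsIneqAdd α L β k
      = β k + (L.map (fun f => if f.cond (α k) then f.b else 0)).sum := by
  induction L generalizing β with
  | nil => simp [applyOpsIneqAdd]
  | cons f L ih =>
    simp only [applyOpsIneqAdd, List.foldl_cons, List.map_cons, List.sum_cons] at *
    rw [ih]
    unfold OpIneqAdd.apply
    split_ifs <;> ring

lemma applyOps_map_roundOp (n : ℕ) (L : List OpIneqAdd) (β : Fin (n + 1) → ℝ) :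
    applyOpsIneqAdd (ssAlpha n) (L.map (roundOp n)) β = applyOpsIneqAdd (ssAlpha n) L β := by
  induction L generalizing β with
  | nil => rfl
  | cons f L ih =>
    simp only [List.map_cons, applyOpsIneqAdd, List.foldl_cons]
    rw [roundOp_apply]
    exact ih _

lemma exists_diff (n : ℕ) (s : ℕ → ℤ) :
    IsDiffIneqAdd (ssAlpha n)
      ((List.range (n + 1)).map (fun ℓ : ℕ => (⟨false, (ℓ : ℝ), ((s ℓ : ℤ) : ℝ)⟩ : OpIneqAdd)))
      (ssBS n) (ssBT n s) := by
  funext k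
  rw [applyOps_sum]
  simp only [ssBS, ssBT, zero_add, List.map_map, Function.comp_def]
  have hsum : ((List.range (n + 1)).map
      (fun ℓ : ℕ => if OpIneqAdd.cond ⟨false, (ℓ : ℝ), ((s ℓ : ℤ) : ℝ)⟩ (ssAlpha n k)
        then ((s ℓ : ℤ) : ℝ) else 0)).sum
      = ∑ ℓ ∈ Finset.range (n + 1),
          (if OpIneqAdd.cond ⟨false, (ℓ : ℝ), ((s ℓ : ℤ) : ℝ)⟩ (ssAlpha n k)
            then ((s ℓ : ℤ) : ℝ) else 0) := rfl
  rw [hsum]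
  have hcond : ∀ ℓ : ℕ,
      (if OpIneqAdd.cond ⟨false, (ℓ : ℝ), ((s ℓ : ℤ) : ℝ)⟩ (ssAlpha n k)
        then ((s ℓ : ℤ) : ℝ) else 0)
      = (if ℓ ≤ (k : ℕ) then ((s ℓ : ℤ) : ℝ) else 0) := by
    intro ℓ
    have : OpIneqAdd.cond ⟨false, (ℓ : ℝ), ((s ℓ : ℤ) : ℝ)⟩ (ssAlpha n k) ↔ ℓ ≤ (k : ℕ) := by
      simp only [OpIneqAdd.cond, ssAlpha, Bool.false_eq_true, if_false]
      push_cast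
      exact Nat.cast_le
    rw [if_congr this rfl rfl]
  rw [Finset.sum_congr rfl (fun ℓ _ => hcond ℓ)]
  have hsub : Finset.range ((k : ℕ) + 1) ⊆ Finset.range (n + 1) :=
    Finset.range_subset_range.mpr (by omega)
  rw [← Finset.sum_subset hsub (by
    intro x _ hx
    rw [if_neg]
    simpa using hx)]
  push_cast
  exact (Finset.sum_congr rfl (fun x hx => by
    rw [if_pos (Nat.lt_succ_iff.mp (Finset.mem_range.mp hx))])).symm

/-- For the SubsetSum instance, the set of diffs from `β_S` to `β_T` under `F(≤≥,+)`
contains a bounded best diff: a best diff in which every operation has a condition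
`A ≤ a'` or `A ≥ a'` whose threshold `a'` is an integer in `{0,…,n}`. -/
theorem subsetSum_exists_bounded_best_diff (n : ℕ) (s : ℕ → ℤ) (t : ℤ)
    (ht : 0 < t) (hs0 : s 0 = -t) (hpos : ∀ i, 1 ≤ i → i ≤ n → 0 < s i) :
    ∃ F : List OpIneqAdd,
      IsBestDiffIneqAdd (ssAlpha n) F (ssBS n) (ssBT n s) ∧
      ∀ f ∈ F, ∃ a' : ℤ, 0 ≤ a' ∧ a' ≤ (n : ℤ) ∧ f.a = (a' : ℝ) := by
  classical
  have hex : ∃ m : ℕ, ∃ L : List OpIneqAdd,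
      IsDiffIneqAdd (ssAlpha n) L (ssBS n) (ssBT n s) ∧ L.length = m :=
    ⟨_, _, exists_diff n s, rfl⟩
  obtain ⟨L, hL, hlen⟩ := Nat.find_spec hex
  refine ⟨L.map (roundOp n), ⟨?_, ?_⟩, ?_⟩
  · unfold IsDiffIneqAdd
    rw [applyOps_map_roundOp]
    exact hL
  · intro L' hL'
    rw [List.length_map, hlen]
    exact Nat.find_min' hex ⟨L', hL', rfl⟩
  · intro f hf
    obtain ⟨g, _, rfl⟩ := List.mem_map.mp hf
    exact roundOp_bounded n g
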